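/- Let Γ be a group, Γ₀ ≤ Γ a subgroup, and g ∈ Γ an element such that the conjugates g^i Γ₀ g^{-i}, for i ∈ ℤ, pairwise commute (elementwise, for distinct i). Then there exists a surjective group homomorphism from the restricted wreath product Γ₀ ≀ ℤ onto the subgroup ⟨Γ₀, g⟩ of Γ whose kernel is metabelian. -/

import Mathlib

/-- The restricted direct product `⊕_{i∈ℤ} Γ₀`, as the subgroup of `ℤ → Γ₀` of finitely
supported functions. -/
def wreathBase (Γ₀ : Type*) [Group Γ₀] : Subgroup (ℤ → Γ₀) where
  carrier := {f | {i | f i ≠ 1}.Finite}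
  one_mem' := by simp
  mul_mem' := by
    intro a b ha hb
    apply (ha.union hb).subset
    intro i hi
    simp only [Set.mem_union, Set.mem_setOf_eq]
    by_contra h
    push_neg at h
    exact hi (by simp [Pi.mul_apply, h.1, h.2])
  inv_mem' := by
    intro a ha
    have h : {i | a⁻¹ i ≠ 1} = {i | a i ≠ 1} := by
      ext i
      simp [inv_eq_one]
    show {i | a⁻¹ i ≠ 1}.Finite
    rw [h]
    exact ha

/-- The shift automorphism of the restricted direct product. -/
def wreathShift (Γ₀ : Type*) [Group Γ₀] (n : ℤ) : wreathBase Γ₀ ≃* wreathBase Γ₀ where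
  toFun f := ⟨fun i => (f : ℤ → Γ₀) (i - n), by
    apply (f.2.image (· + n)).subset
    intro i hi
    exact ⟨i - n, hi, by ring⟩⟩
  invFun f := ⟨fun i => (f : ℤ → Γ₀) (i + n), by
    apply (f.2.image (· - n)).subset
    intro i hi
    exact ⟨i + n, hi, by ring⟩⟩
  left_inv f := by
    apply Subtype.ext
    funext i
    show (f : ℤ → Γ₀) (i + n - n) = (f : ℤ → Γ₀) i
    congr 1
    ring
  right_inv f := by
    apply Subtype.ext
    funext i
    show (f : ℤ → Γ₀) (i - n + n) = (f : ℤ → Γ₀) i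
    congr 1
    ring
  map_mul' f g := rfl

/-- The shift action of `ℤ` on `⊕_{i∈ℤ} Γ₀`. -/
def wreathShiftHom (Γ₀ : Type*) [Group Γ₀] :
    Multiplicative ℤ →* MulAut (wreathBase Γ₀) where
  toFun n := wreathShift Γ₀ n.toAdd
  map_one' := by
    ext f i
    show (f : ℤ → Γ₀) (i - 0) = (f : ℤ → Γ₀) i
    congr 1
    ring
  map_mul' x y := by
    ext f i
    show (f : ℤ → Γ₀) (i - (x.toAdd + y.toAdd)) = (f : ℤ → Γ₀) (i - x.toAdd - y.toAdd)
    congr 1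
    ring

/-- The restricted wreath product `Γ₀ ≀ ℤ = (⊕_{i∈ℤ} Γ₀) ⋊ ℤ`. -/
def Wreath (Γ₀ : Type*) [Group Γ₀] : Type _ :=
  SemidirectProduct (wreathBase Γ₀) (Multiplicative ℤ) (wreathShiftHom Γ₀)

instance (Γ₀ : Type*) [Group Γ₀] : Group (Wreath Γ₀) :=
  inferInstanceAs (Group (SemidirectProduct _ _ _))

section Stmt2Aux

private lemma multiset_noncommProd_congr' {γ : Type*} [Monoid γ] {m₁ m₂ : Multiset γ}
    (h : m₁ = m₂) (c₁ : ∀ x ∈ m₁, ∀ y ∈ m₁, x ≠ y → Commute x y)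
    (c₂ : ∀ x ∈ m₂, ∀ y ∈ m₂, x ≠ y → Commute x y) :
    m₁.noncommProd (fun x hx y hy hxy => c₁ x hx y hy hxy) =
      m₂.noncommProd (fun x hx y hy hxy => c₂ x hx y hy hxy) := by
  subst h; rfl

variable {Γ : Type*} [Group Γ]

private def conjAt (Γ₀ : Subgroup Γ) (g : Γ) (i : ℤ) : ↥Γ₀ →* Γ :=
  (MulAut.conj (g ^ i)).toMonoidHom.comp Γ₀.subtype

private lemma conjAt_apply (Γ₀ : Subgroup Γ) (g : Γ) (i : ℤ) (a : ↥Γ₀) :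
    conjAt Γ₀ g i a = g ^ i * (a : Γ) * (g ^ i)⁻¹ := rfl

private abbrev HC (Γ₀ : Subgroup Γ) (g : Γ) : Prop :=
  ∀ i j : ℤ, i ≠ j → ∀ a b : ↥Γ₀, Commute (conjAt Γ₀ g i a) (conjAt Γ₀ g j b)

variable {Γ₀ : Subgroup Γ} {g : Γ}

private def basePF (hc : HC Γ₀ g) (v : ℤ → ↥Γ₀) (s : Finset ℤ) : Γ :=
  s.noncommProd (fun i => conjAt Γ₀ g i (v i)) fun i _ j _ hij => hc i j hij _ _

private lemma basePF_subset (hc : HC Γ₀ g) (v : ℤ → ↥Γ₀) {t s : Finset ℤ} (hts : t ⊆ s)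
    (hv : ∀ i ∈ s, i ∉ t → v i = 1) : basePF hc v s = basePF hc v t := by
  classical
  calc basePF hc v s
      = (t ∪ (s \ t)).noncommProd (fun i => conjAt Γ₀ g i (v i))
          (fun i _ j _ hij => hc i j hij _ _) :=
        Finset.noncommProd_congr (Finset.union_sdiff_of_subset hts).symm (fun _ _ => rfl) _
    _ = basePF hc v t * (s \ t).noncommProd (fun i => conjAt Γ₀ g i (v i))
          (fun i _ j _ hij => hc i j hij _ _) :=
        Finset.noncommProd_union_of_disjoint Finset.disjoint_sdiff _ _
    _ = basePF hc v t * 1 ^ (s \ t).card := by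
        refine congrArg (basePF hc v t * ·) (Finset.noncommProd_eq_pow_card _ _ _ _ ?_)
        intro i hi
        rw [Finset.mem_sdiff] at hi
        rw [hv i hi.1 hi.2, map_one]
    _ = basePF hc v t := by rw [one_pow, mul_one]

private lemma basePF_congr (hc : HC Γ₀ g) (v : ℤ → ↥Γ₀) {s t : Finset ℤ}
    (h : ∀ i, v i ≠ 1 → (i ∈ s ↔ i ∈ t)) : basePF hc v s = basePF hc v t := by
  classical
  have h1 : basePF hc v s = basePF hc v (s ∩ t) := by
    apply basePF_subset hc v Finset.inter_subset_left
    intro i his hint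
    by_contra hne
    exact hint (Finset.mem_inter.2 ⟨his, (h i hne).1 his⟩)
  have h2 : basePF hc v t = basePF hc v (s ∩ t) := by
    apply basePF_subset hc v Finset.inter_subset_right
    intro i hit hint
    by_contra hne
    exact hint (Finset.mem_inter.2 ⟨(h i hne).2 hit, hit⟩)
  rw [h1, h2]

private noncomputable def baseHom (hc : HC Γ₀ g) : wreathBase Γ₀ →* Γ where
  toFun f := basePF hc f.1 f.2.toFinset
  map_one' := by
    rw [basePF_congr hc ((1 : wreathBase Γ₀) : ℤ → ↥Γ₀) (t := (∅ : Finset ℤ)) (fun i hi => absurd rfl hi)]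
    rfl
  map_mul' f h := by
    classical
    have hsub : ∀ (k : wreathBase Γ₀) (s : Finset ℤ), (∀ i, k.1 i ≠ 1 → i ∈ s) →
        basePF hc k.1 k.2.toFinset = basePF hc k.1 s := fun k s hs =>
      basePF_congr hc _ (fun i hi => iff_of_true (k.2.mem_toFinset.2 hi) (hs i hi))
    set s : Finset ℤ := f.2.toFinset ∪ h.2.toFinset with hs_def
    have hf : ∀ i, f.1 i ≠ 1 → i ∈ s := fun i hi =>
      Finset.mem_union_left _ (f.2.mem_toFinset.2 hi)
    have hh : ∀ i, h.1 i ≠ 1 → i ∈ s := fun i hi =>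
      Finset.mem_union_right _ (h.2.mem_toFinset.2 hi)
    have hfh : ∀ i, (f * h).1 i ≠ 1 → i ∈ s := by
      intro i hi
      by_contra hmem
      have h1 : f.1 i = 1 := by by_contra hx; exact hmem (hf i hx)
      have h2 : h.1 i = 1 := by by_contra hx; exact hmem (hh i hx)
      exact hi (by show f.1 i * h.1 i = 1; rw [h1, h2, mul_one])
    rw [hsub _ _ hfh, hsub f s hf, hsub h s hh]
    refine Eq.trans (Finset.noncommProd_congr rfl
        (g := (fun i => conjAt Γ₀ g i (f.1 i)) * (fun i => conjAt Γ₀ g i (h.1 i)))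
        (fun x _ => by simp) (fun i _ j _ hij => hc i j hij _ _))
      (Finset.noncommProd_mul_distrib _ _ (fun i _ j _ hij => hc i j hij _ _)
        (fun i _ j _ hij => hc i j hij _ _) (fun i _ j _ hij => hc i j hij _ _))

end Stmt2Aux
section Stmt2Aux2

variable {Γ : Type*} [Group Γ] {Γ₀ : Subgroup Γ} {g : Γ}

private lemma finset_noncommProd_map' {α β γ : Type*} [Monoid γ] (s : Finset α) (e : α ↪ β)
    (F : β → γ) (comm : ((s.map e : Finset β) : Set β).Pairwise (Function.onFun Commute F))
    (comm' : ((s : Finset α) : Set α).Pairwise (Function.onFun Commute (fun a => F (e a)))) :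
    (s.map e).noncommProd F comm = s.noncommProd (fun a => F (e a)) comm' := by
  classical
  induction s using Finset.cons_induction with
  | empty => simp
  | cons a s ha ih =>
    have h1 : (Finset.cons a s ha).map e = Finset.cons (e a) (s.map e)
        (fun hmem => ha (by
          rcases Finset.mem_map.1 hmem with ⟨x, hx, hex⟩
          exact (e.injective.eq_iff.1 hex) ▸ hx)) := by
      ext x; simp
    refine (Finset.noncommProd_congr h1 (fun _ _ => rfl) (h1 ▸ comm)).trans ?_
    refine (Finset.noncommProd_cons (s.map e) (e a) F _ (h1 ▸ comm)).trans ?_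
    rw [Finset.noncommProd_cons,
      ih (comm.mono (by rw [h1]; intro x hx; exact Finset.mem_cons_of_mem hx))
        (comm'.mono (fun x hx => Finset.mem_cons_of_mem hx))]

private lemma baseHom_equivariant (hc : HC Γ₀ g) (n : Multiplicative ℤ) (f : wreathBase Γ₀) :
    baseHom hc ((wreathShiftHom Γ₀ n) f) =
      g ^ n.toAdd * baseHom hc f * (g ^ n.toAdd)⁻¹ := by
  classical
  set m := Multiplicative.toAdd n with hm
  have hshift : ∀ i, ((wreathShiftHom Γ₀ n) f).1 i = f.1 (i - m) := fun _ => rfl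
  set e : ℤ ↪ ℤ := addRightEmbedding m with he
  have hee : ∀ x, e x = x + m := fun _ => rfl
  -- step 1 : rewrite the left side as a product over (f support).map e
  have h1 : baseHom hc ((wreathShiftHom Γ₀ n) f) =
      basePF hc ((wreathShiftHom Γ₀ n) f).1 (f.2.toFinset.map e) := by
    apply basePF_congr
    intro i hi
    rw [hshift] at hi
    constructor
    · intro _
      rw [Finset.mem_map]
      exact ⟨i - m, f.2.mem_toFinset.2 hi, by rw [hee]; ring⟩
    · intro _
      exact (((wreathShiftHom Γ₀ n) f).2.mem_toFinset).2 hi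
  rw [h1]
  -- step 2 : reindex
  have h2 : basePF hc ((wreathShiftHom Γ₀ n) f).1 (f.2.toFinset.map e) =
      f.2.toFinset.noncommProd (fun j => conjAt Γ₀ g (j + m) (f.1 j))
        (fun i _ j _ hij => hc _ _ (by simpa using hij) _ _) := by
    refine Eq.trans (finset_noncommProd_map' _ e _
      (fun x _ y _ hxy => hc x y hxy _ _)
      (fun i _ j _ hij => hc _ _ (fun hij2 => hij (e.injective hij2)) _ _)) ?_
    refine Finset.noncommProd_congr rfl (fun x _ => ?_) _
    rw [hshift, hee, add_sub_cancel_right]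
  rw [h2]
  -- step 3 : right side
  have h3 : g ^ m * baseHom hc f * (g ^ m)⁻¹ =
      MulAut.conj (g ^ m) (basePF hc f.1 f.2.toFinset) := rfl
  rw [h3]
  show _ = MulAut.conj (g ^ m) (Finset.noncommProd _ _ _)
  refine Eq.trans ?_ (Finset.map_noncommProd _ _ _ _).symm
  refine Finset.noncommProd_congr rfl (fun x _ => ?_) _
  rw [conjAt_apply, conjAt_apply, MulAut.conj_apply]
  group

end Stmt2Aux2
section Stmt2Aux3

variable {Γ : Type*} [Group Γ] {Γ₀ : Subgroup Γ} {g : Γ}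

private lemma conj_commute_of_one (hc : HC Γ₀ g) {h : wreathBase Γ₀}
    (H : baseHom hc h = 1) (i₀ : ℤ) (w : Γ)
    (hw : ∀ j : ℤ, j ≠ i₀ → ∀ a : ↥Γ₀, Commute w (conjAt Γ₀ g j a)) :
    Commute w (conjAt Γ₀ g i₀ (h.1 i₀)) := by
  classical
  by_cases h0 : h.1 i₀ = 1
  · rw [h0, map_one]; exact Commute.one_right w
  · have hi₀ : i₀ ∈ h.2.toFinset := h.2.mem_toFinset.2 h0
    have hins : h.2.toFinset = insert i₀ (h.2.toFinset.erase i₀) := (Finset.insert_erase hi₀).symm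
    have hkey : (1 : Γ) = conjAt Γ₀ g i₀ (h.1 i₀) *
        (h.2.toFinset.erase i₀).noncommProd (fun i => conjAt Γ₀ g i (h.1 i))
          (fun i _ j _ hij => hc i j hij _ _) := by
      rw [← H]
      show basePF hc h.1 h.2.toFinset = _
      refine Eq.trans (Finset.noncommProd_congr hins (fun _ _ => rfl)
        (fun i _ j _ hij => hc i j hij _ _)) ?_
      exact Finset.noncommProd_insert_of_notMem _ _ _ _ (Finset.notMem_erase _ _)
    have hP : Commute w ((h.2.toFinset.erase i₀).noncommProd (fun i => conjAt Γ₀ g i (h.1 i))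
        (fun i _ j _ hij => hc i j hij _ _)) :=
      Finset.noncommProd_commute _ _ _ _ (fun j hj => hw j (Finset.ne_of_mem_erase hj) _)
    rw [eq_inv_of_mul_eq_one_left hkey.symm]
    exact hP.inv_right

private lemma commute_of_baseHom_eq_one (hc : HC Γ₀ g) {h₁ h₂ : wreathBase Γ₀}
    (H1 : baseHom hc h₁ = 1) (H2 : baseHom hc h₂ = 1) (i₀ : ℤ) :
    Commute (h₁.1 i₀) (h₂.1 i₀) := by
  have key : Commute (conjAt Γ₀ g i₀ (h₂.1 i₀)) (conjAt Γ₀ g i₀ (h₁.1 i₀)) := by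
    apply conj_commute_of_one hc H1 i₀
    intro j hj a
    exact hc i₀ j (Ne.symm hj) _ _
  have hinj : Function.Injective (conjAt Γ₀ g i₀) := by
    intro x y hxy
    apply Subtype.coe_injective
    have := congrArg (fun z => (g ^ i₀)⁻¹ * z * g ^ i₀) hxy
    simpa [conjAt_apply, mul_assoc] using this
  apply hinj
  rw [map_mul, map_mul]
  exact key.symm

private lemma baseHom_mem_closure (hc : HC Γ₀ g) (f : wreathBase Γ₀) :
    baseHom hc f ∈ Subgroup.closure ((Γ₀ : Set Γ) ∪ {g}) := by
  have hg : g ∈ Subgroup.closure ((Γ₀ : Set Γ) ∪ {g}) := Subgroup.subset_closure (Or.inr rfl)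
  show basePF hc f.1 f.2.toFinset ∈ _
  unfold basePF
  refine Finset.noncommProd_induction _ _ _
    (fun z => z ∈ Subgroup.closure ((Γ₀ : Set Γ) ∪ {g}))
    (fun a b hha hhb => mul_mem hha hhb) (one_mem _) ?_
  intro i _
  rw [conjAt_apply]
  exact mul_mem (mul_mem (zpow_mem hg i)
    (Subgroup.subset_closure (Or.inl (f.1 i).2))) (inv_mem (zpow_mem hg i))

end Stmt2Aux3

open scoped commutatorElement

/-- If the conjugates `gⁱ Γ₀ g⁻ⁱ` pairwise commute elementwise, then there is a
surjective homomorphism from `Γ₀ ≀ ℤ` onto `⟨Γ₀, g⟩` whose kernel is metabelian (i.e. commutators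
of kernel elements pairwise commute). -/
theorem stmt2 {Γ : Type*} [Group Γ] (Γ₀ : Subgroup Γ) (g : Γ)
    (hcomm : ∀ i j : ℤ, i ≠ j → ∀ a b : Γ, a ∈ Γ₀ → b ∈ Γ₀ →
      Commute (g ^ i * a * g ^ (-i)) (g ^ j * b * g ^ (-j))) :
    ∃ φ : Wreath ↥Γ₀ →* Γ,
      φ.range = Subgroup.closure ((Γ₀ : Set Γ) ∪ {g}) ∧
      ∀ a b c d : Wreath ↥Γ₀, a ∈ φ.ker → b ∈ φ.ker → c ∈ φ.ker → d ∈ φ.ker →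
        Commute ⁅a, b⁆ ⁅c, d⁆ := by
  classical
  have hc : HC Γ₀ g := by
    intro i j hij a b
    have := hcomm i j hij a b a.2 b.2
    rwa [zpow_neg, zpow_neg, ← conjAt_apply, ← conjAt_apply] at this
  have hcompat : ∀ n : Multiplicative ℤ,
      (baseHom hc).comp ((wreathShiftHom ↥Γ₀) n).toMonoidHom =
        (MulAut.conj ((zpowersHom Γ g) n)).toMonoidHom.comp (baseHom hc) := by
    intro n
    ext f
    simp only [MonoidHom.comp_apply, MulEquiv.coe_toMonoidHom, MulAut.conj_apply,
      zpowersHom_apply]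
    exact baseHom_equivariant hc n f
  refine ⟨SemidirectProduct.lift (baseHom hc) (zpowersHom Γ g) hcompat, ?_, ?_⟩
  · -- range
    apply le_antisymm
    · rintro x ⟨y, rfl⟩
      have hy : baseHom hc y.left ∈ Subgroup.closure ((Γ₀ : Set Γ) ∪ {g}) :=
        baseHom_mem_closure hc y.left
      show baseHom hc y.left * g ^ (Multiplicative.toAdd y.right) ∈
        Subgroup.closure ((Γ₀ : Set Γ) ∪ {g})
      have hgmem : g ∈ Subgroup.closure ((Γ₀ : Set Γ) ∪ {g}) :=
        Subgroup.subset_closure (Or.inr rfl)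
      exact mul_mem hy (Subgroup.zpow_mem _ hgmem _)
    · rw [Subgroup.closure_le]
      rintro x (hx | rfl)
      · refine ⟨SemidirectProduct.inl ⟨Pi.mulSingle 0 ⟨x, hx⟩, ?_⟩, ?_⟩
        · refine Set.Finite.subset (Set.finite_singleton 0) (fun i hi => ?_)
          simp only [Set.mem_setOf_eq] at hi
          rw [Set.mem_singleton_iff]
          by_contra h0
          exact hi (Pi.mulSingle_eq_of_ne h0 _)
        · refine Eq.trans (SemidirectProduct.lift_inl _ _ hcompat _) ?_
          show basePF hc _ _ = x
          refine Eq.trans (basePF_congr hc _ (t := ({0} : Finset ℤ)) ?_) ?_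
          · intro i hi
            refine iff_of_true ((Set.Finite.mem_toFinset _).2 hi) ?_
            rw [Finset.mem_singleton]
            by_contra h0
            exact hi (Pi.mulSingle_eq_of_ne h0 _)
          · refine Eq.trans (Finset.noncommProd_singleton _ _) ?_
            simp [conjAt_apply, Pi.mulSingle_eq_same]
      · refine ⟨SemidirectProduct.inr (Multiplicative.ofAdd 1), ?_⟩
        refine Eq.trans (SemidirectProduct.lift_inr _ _ hcompat _) ?_
        rw [zpowersHom_apply]
        simp
  · -- kernel metabelian
    intro a b c d ha hb hc1 hd
    have hkerc : ∀ x y : Wreath ↥Γ₀,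
        x ∈ (SemidirectProduct.lift (baseHom hc) (zpowersHom Γ g) hcompat).ker →
        y ∈ (SemidirectProduct.lift (baseHom hc) (zpowersHom Γ g) hcompat).ker →
        ∃ l : wreathBase ↥Γ₀, SemidirectProduct.inl l = ⁅x, y⁆ ∧ baseHom hc l = 1 := by
      intro x y hx hy
      have hmem : ⁅x, y⁆ ∈ (SemidirectProduct.lift (baseHom hc) (zpowersHom Γ g) hcompat).ker := by
        refine MonoidHom.mem_ker.2 ?_
        refine (map_commutatorElement _ _ _).trans ?_
        rw [MonoidHom.mem_ker.1 hx,
          MonoidHom.mem_ker.1 hy]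
        simp
      have hr : ⁅x, y⁆ ∈ (SemidirectProduct.rightHom
          (φ := wreathShiftHom ↥Γ₀)).ker := by
        refine MonoidHom.mem_ker.2 ?_
        refine (map_commutatorElement _ _ _).trans ?_
        exact commutatorElement_eq_one_iff_commute.2 (mul_comm _ _)
      replace hr := (SemidirectProduct.range_inl_eq_ker_rightHom (φ := wreathShiftHom ↥Γ₀)).ge hr
      obtain ⟨l, hl⟩ := hr
      refine ⟨l, hl, ?_⟩
      have h2 : (SemidirectProduct.lift (baseHom hc) (zpowersHom Γ g) hcompat)
          (SemidirectProduct.inl l) = 1 := by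
        rw [hl]
        exact MonoidHom.mem_ker.1 hmem
      exact (SemidirectProduct.lift_inl _ _ hcompat l).symm.trans h2
    obtain ⟨l₁, hl₁, hb₁⟩ := hkerc a b ha hb
    obtain ⟨l₂, hl₂, hb₂⟩ := hkerc c d hc1 hd
    rw [← hl₁, ← hl₂]
    have hcl : Commute l₁ l₂ := by
      refine Subtype.ext (funext fun i => ?_)
      exact commute_of_baseHom_eq_one hc hb₁ hb₂ i
    exact hcl.map (SemidirectProduct.inl)
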